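/- Let R be a commutative halidon ring with index m and primitive m-th root of unity ω, let G be a cyclic group of order m with generator g, and let u = ∑_{j=0}^{m−1} a_j g^j be an element of the group ring RG with associated elements λ_r = ∑_{j=0}^{m−1} a_j ω^{j·r} for r = 0,…,m−1. Then u is an idempotent of RG (u² = u) if and only if every λ_r is an idempotent of R (λ_r² = λ_r). -/

import Mathlib

def IsPrimitiveHalidonRoot {R : Type*} [CommRing R] (m : ℕ) (ω : R) : Prop :=
  ω ^ m = 1 ∧ (∀ k : ℕ, 0 < k → k < m → ω ^ k ≠ 1) ∧
    ∀ k : ℕ, 0 < k → k < m → ∑ r ∈ Finset.range m, ω ^ (r * k) = 0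

section aux
variable {R : Type*} [CommRing R] {m : ℕ} {ω : R}

lemma halidon_pow_modEq (h1 : ω ^ m = 1) {s t : ℕ} (h : s ≡ t [MOD m]) :
    ω ^ s = ω ^ t := by
  have key : ∀ n : ℕ, ω ^ n = ω ^ (n % m) := by
    intro n
    conv_lhs => rw [← Nat.mod_add_div n m]
    rw [pow_add, pow_mul, h1, one_pow, mul_one]
  rw [key s, key t, h]

lemma halidon_ortho (hm : 0 < m) (hω : IsPrimitiveHalidonRoot m ω) (t : ℕ) :
    ∑ r ∈ Finset.range m, ω ^ (r * t) = if t % m = 0 then (m : R) else 0 := by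
  obtain ⟨h1, -, h3⟩ := hω
  by_cases h : t % m = 0
  · simp only [h, if_pos]
    have : ∀ r ∈ Finset.range m, ω ^ (r * t) = 1 := by
      intro r _
      have : r * t ≡ 0 [MOD m] := by
        have : m ∣ t := Nat.dvd_of_mod_eq_zero h
        exact (Nat.modEq_zero_iff_dvd).2 (this.mul_left r)
      rw [halidon_pow_modEq h1 this, pow_zero]
    rw [Finset.sum_congr rfl this]
    simp
  · simp only [h, if_neg, if_false]
    have hk : ∑ r ∈ Finset.range m, ω ^ (r * (t % m)) = 0 :=
      h3 (t % m) (Nat.pos_of_ne_zero h) (Nat.mod_lt t hm)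
    rw [← hk]
    refine Finset.sum_congr rfl fun r _ => ?_
    exact halidon_pow_modEq h1 ((Nat.mod_modEq t m).symm.mul_left r)

lemma halidon_dft_inj (hm : 0 < m) (hω : IsPrimitiveHalidonRoot m ω)
    (hmu : IsUnit (m : R)) (b : ℕ → R)
    (hb : ∀ r < m, ∑ k ∈ Finset.range m, b k * ω ^ (k * r) = 0) :
    ∀ k < m, b k = 0 := by
  intro k hk
  have key : ∑ r ∈ Finset.range m,
      (∑ j ∈ Finset.range m, b j * ω ^ (j * r)) * ω ^ ((m - k) * r) = 0 := by
    refine Finset.sum_eq_zero fun r hr => ?_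
    rw [hb r (Finset.mem_range.1 hr), zero_mul]
  have key2 : ∑ r ∈ Finset.range m,
      (∑ j ∈ Finset.range m, b j * ω ^ (j * r)) * ω ^ ((m - k) * r)
      = b k * (m : R) := by
    have : ∀ r ∈ Finset.range m,
        (∑ j ∈ Finset.range m, b j * ω ^ (j * r)) * ω ^ ((m - k) * r)
        = ∑ j ∈ Finset.range m, b j * ω ^ ((j + (m - k)) * r) := by
      intro r _
      rw [Finset.sum_mul]
      refine Finset.sum_congr rfl fun j _ => ?_
      rw [mul_assoc, ← pow_add, add_mul]
    rw [Finset.sum_congr rfl this, Finset.sum_comm]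
    have : ∀ j ∈ Finset.range m,
        ∑ r ∈ Finset.range m, b j * ω ^ ((j + (m - k)) * r)
        = b j * (if (j + (m - k)) % m = 0 then (m : R) else 0) := by
      intro j _
      rw [← Finset.mul_sum]
      congr 1
      have := halidon_ortho hm hω (j + (m - k))
      rw [← this]
      refine Finset.sum_congr rfl fun r _ => ?_
      rw [mul_comm (j + (m - k)) r]
    rw [Finset.sum_congr rfl this]
    rw [Finset.sum_eq_single k]
    · have : (k + (m - k)) % m = 0 := by
        have : k + (m - k) = m := by omega
        simp [this]
      rw [this, if_pos rfl]
    · intro j hj hjk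
      have hjm := Finset.mem_range.1 hj
      have : (j + (m - k)) % m ≠ 0 := by
        intro h
        obtain ⟨c, hc⟩ := Nat.dvd_of_mod_eq_zero h
        rcases Nat.lt_or_ge c 2 with hc2 | hc2
        · interval_cases c <;> omega
        · have : 2 * m ≤ m * c := by
            calc 2 * m = m * 2 := by ring
              _ ≤ m * c := Nat.mul_le_mul_left m hc2
          omega
      rw [if_neg this, mul_zero]
    · intro h
      exact absurd (Finset.mem_range.2 hk) h
  have : b k * (m : R) = 0 := by rw [← key2, key]
  obtain ⟨u, hu⟩ := hmu
  have := congrArg (· * (↑u⁻¹ : R)) this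
  simp only [zero_mul, mul_assoc, ← hu, Units.mul_inv, mul_one] at this
  exact this
end aux

/-- Let `R` be a commutative halidon ring with index `m` and primitive `m`-th root of
unity `ω`, let `G = ⟨g⟩` be cyclic of order `m`, and let `u = ∑_j a_j g^j ∈ RG` with
associated elements `λ_r = ∑_j a_j ω^{j r}`.  Then `u` is an idempotent of the group
ring `RG` iff every `λ_r` is an idempotent of `R`. -/
theorem groupRing_isIdempotent_iff {R G : Type*} [CommRing R] [Group G] [Fintype G]
    (m : ℕ) (hm : 0 < m) (ω : R) (hω : IsPrimitiveHalidonRoot m ω)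
    (hmu : IsUnit (m : R))
    (g : G) (hg : ∀ x : G, x ∈ Subgroup.zpowers g) (hcard : Fintype.card G = m)
    (a : ℕ → R) :
    (∑ j ∈ Finset.range m, MonoidAlgebra.single (g ^ j) (a j)) ^ 2 =
        (∑ j ∈ Finset.range m, MonoidAlgebra.single (g ^ j) (a j)) ↔
      ∀ r < m, (∑ j ∈ Finset.range m, a j * ω ^ (j * r)) ^ 2 =
        ∑ j ∈ Finset.range m, a j * ω ^ (j * r) := by
  classical
  obtain ⟨h1, h2, h3⟩ := hω
  have ho : orderOf g = m := by
    rw [orderOf_eq_card_of_forall_mem_zpowers hg, Nat.card_eq_fintype_card, hcard]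
  set u : MonoidAlgebra R G := ∑ j ∈ Finset.range m, MonoidAlgebra.single (g ^ j) (a j)
    with hu
  set c : ℕ → R := fun k => ∑ i ∈ Finset.range m, ∑ j ∈ Finset.range m,
    if (i + j) % m = k then a i * a j else 0 with hc
  -- coefficient of u at g^k
  have hcoeff_u : ∀ k < m, u.coeff (g ^ k) = a k := by
    intro k hk
    rw [hu, MonoidAlgebra.coeff_sum, Finsupp.finset_sum_apply]
    rw [Finset.sum_eq_single k]
    · simp [MonoidAlgebra.coeff_single, Finsupp.single_apply]
    · intro j hj hjk
      have hjm := Finset.mem_range.1 hj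
      have : g ^ j ≠ g ^ k := by
        intro h
        rw [pow_eq_pow_iff_modEq, ho] at h
        rw [Nat.ModEq, Nat.mod_eq_of_lt hjm, Nat.mod_eq_of_lt hk] at h
        exact hjk h
      simp [MonoidAlgebra.coeff_single, Finsupp.single_apply, this]
    · intro h
      exact absurd (Finset.mem_range.2 hk) h
  -- coefficient of u^2 at g^k
  have hcoeff_u2 : ∀ k < m, (u ^ 2).coeff (g ^ k) = c k := by
    intro k hk
    rw [sq, hu, Finset.sum_mul_sum]
    simp only [MonoidAlgebra.single_mul_single, ← pow_add]
    rw [MonoidAlgebra.coeff_sum, Finsupp.finset_sum_apply]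
    refine Finset.sum_congr rfl fun i hi => ?_
    rw [MonoidAlgebra.coeff_sum, Finsupp.finset_sum_apply]
    refine Finset.sum_congr rfl fun j hj => ?_
    have : g ^ (i + j) = g ^ k ↔ (i + j) % m = k := by
      rw [pow_eq_pow_iff_modEq, ho, Nat.ModEq, Nat.mod_eq_of_lt hk]
    rw [MonoidAlgebra.coeff_single, Finsupp.single_apply]
    by_cases h : (i + j) % m = k
    · rw [if_pos (this.2 h), if_pos h]
    · rw [if_neg (fun hh => h (this.1 hh)), if_neg h]
  -- u^2 = u ↔ ∀ k < m, c k = a k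
  have hmain : u ^ 2 = u ↔ ∀ k < m, c k = a k := by
    constructor
    · intro h k hk
      rw [← hcoeff_u2 k hk, h, hcoeff_u k hk]
    · intro h
      ext x
      obtain ⟨n, hn⟩ := Subgroup.mem_zpowers_iff.1 (hg x)
      set k : ℕ := (n % (m : ℤ)).toNat with hkdef
      have hkm : k < m := by
        have h1 : (0:ℤ) ≤ n % (m : ℤ) := Int.emod_nonneg n (by exact_mod_cast hm.ne')
        have h2 : n % (m : ℤ) < (m : ℤ) := Int.emod_lt_of_pos n (by exact_mod_cast hm)
        omega
      have hx : x = g ^ k := by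
        rw [← hn]
        have : g ^ (k : ℤ) = g ^ n := by
          have : (k : ℤ) = n % (m : ℤ) := by
            have h1 : (0:ℤ) ≤ n % (m : ℤ) := Int.emod_nonneg n (by exact_mod_cast hm.ne')
            omega
          rw [this]
          conv_rhs => rw [← Int.emod_add_mul_ediv n (m : ℤ)]
          rw [zpow_add, zpow_mul]
          have : g ^ (m : ℤ) = 1 := by
            rw [zpow_natCast, ← ho, pow_orderOf_eq_one]
          rw [this, one_zpow, mul_one]
        rw [← zpow_natCast g k, this]
      rw [hx, hcoeff_u2 k hkm, hcoeff_u k hkm, h k hkm]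
  -- λ_r ^ 2 = ∑ c k ω^{k r}
  have hlam : ∀ r : ℕ, (∑ j ∈ Finset.range m, a j * ω ^ (j * r)) ^ 2
      = ∑ k ∈ Finset.range m, c k * ω ^ (k * r) := by
    intro r
    rw [sq, Finset.sum_mul_sum]
    have lhs_eq : ∀ i ∈ Finset.range m, ∀ j ∈ Finset.range m,
        (a i * ω ^ (i * r)) * (a j * ω ^ (j * r))
        = a i * a j * ω ^ (((i + j) % m) * r) := by
      intro i _ j _
      have : ω ^ (((i + j) % m) * r) = ω ^ ((i + j) * r) :=
        halidon_pow_modEq h1 ((Nat.mod_modEq (i + j) m).mul_right r)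
      rw [this, add_mul, pow_add]; ring
    rw [Finset.sum_congr rfl fun i hi => Finset.sum_congr rfl fun j hj => lhs_eq i hi j hj]
    have rhs_eq : ∀ k ∈ Finset.range m, c k * ω ^ (k * r)
        = ∑ i ∈ Finset.range m, ∑ j ∈ Finset.range m,
            if (i + j) % m = k then a i * a j * ω ^ (k * r) else 0 := by
      intro k _
      rw [hc]
      simp only [Finset.sum_mul, ite_mul, zero_mul]
    have triple : ∀ F : ℕ → ℕ → ℕ → R,
        ∑ k ∈ Finset.range m, ∑ i ∈ Finset.range m, ∑ j ∈ Finset.range m, F k i j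
        = ∑ i ∈ Finset.range m, ∑ j ∈ Finset.range m, ∑ k ∈ Finset.range m, F k i j := by
      intro F
      rw [Finset.sum_comm]
      exact Finset.sum_congr rfl fun i _ => Finset.sum_comm
    rw [Finset.sum_congr rfl rhs_eq,
      triple (fun k i j => if (i + j) % m = k then a i * a j * ω ^ (k * r) else 0)]
    refine Finset.sum_congr rfl fun i hi => Finset.sum_congr rfl fun j hj => ?_
    rw [Finset.sum_ite_eq (Finset.range m) ((i + j) % m) (fun k => a i * a j * ω ^ (k * r))]
    rw [if_pos (Finset.mem_range.2 (Nat.mod_lt _ hm))]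
  rw [hmain]
  constructor
  · intro h r hr
    rw [hlam r]
    refine Finset.sum_congr rfl fun k hk => ?_
    rw [h k (Finset.mem_range.1 hk)]
  · intro h k hk
    have hb : ∀ r < m, ∑ k ∈ Finset.range m, (c k - a k) * ω ^ (k * r) = 0 := by
      intro r hr
      have := h r hr
      rw [hlam r] at this
      calc ∑ k ∈ Finset.range m, (c k - a k) * ω ^ (k * r)
          = ∑ k ∈ Finset.range m, c k * ω ^ (k * r)
            - ∑ k ∈ Finset.range m, a k * ω ^ (k * r) := by
            rw [← Finset.sum_sub_distrib]
            refine Finset.sum_congr rfl fun j _ => ?_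
            ring
        _ = 0 := by rw [this, sub_self]
    have h0 : c k - a k = 0 :=
      halidon_dft_inj hm ⟨h1, h2, h3⟩ hmu (fun k => c k - a k) hb k hk
    exact sub_eq_zero.1 h0
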